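/- Let μ be an integer-valued random measure with compensator ν and let W be a predictable random field with E[∫_{]0,T]×ℝ} |W_s(e)|² ν(ds de)] < ∞ (W ∈ L²(μ)). Then W ∈ G²(μ) and ‖W‖²_{G²(μ)} ≤ ‖W‖²_{L²(μ)}, where ‖W‖²_{G²(μ)} = E[C(W)_T] with C(W) = |W − Ŵ 1_J|² ⋆ ν + ∑_{s≤·} (1 − ν̂_s(ℝ)) |Ŵ_s|² 1_{J\K}(s). -/

import Mathlib

open MeasureTheory Filter Set Function
open scoped ENNReal

noncomputable section

variable {Ω : Type*}

/-- A real function is càdlàg: right-continuous with finite left limits. -/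
def IsCadlag (f : ℝ → ℝ) : Prop :=
  (∀ t : ℝ, ContinuousWithinAt f (Ici t) t) ∧
  (∀ t : ℝ, ∃ l : ℝ, Tendsto f (nhdsWithin t (Iio t)) (nhds l))

/-- Jump of a process at time `t`: `ΔX_t = X_t - X_{t-}`. -/
def jumpOf (X : ℝ → Ω → ℝ) (t : ℝ) (ω : Ω) : ℝ :=
  X t ω - Function.leftLim (fun s => X s ω) t

/-- Sum over the jump times of `X` in `(0,t]` of `g(s, X_{s-}, ΔX_s)`, i.e. the
integral of `g` against the jump measure `μ^X`, as an `ℝ≥0∞`-valued process. -/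
def jumpSum (X : ℝ → Ω → ℝ) (g : ℝ → ℝ → ℝ → ℝ) (t : ℝ) (ω : Ω) : ℝ≥0∞ :=
  ∑' s : {s : ℝ // s ∈ Ioc (0:ℝ) t ∧ jumpOf X s ω ≠ 0},
    ENNReal.ofReal (g (s : ℝ) (Function.leftLim (fun u => X u ω) (s : ℝ)) (jumpOf X (s : ℝ) ω))

/-- Local martingale: there is a localizing sequence of stopping times. -/
def IsLocalMartingale {m : MeasurableSpace Ω} (F : Filtration ℝ m) (P : Measure Ω)
    (M : ℝ → Ω → ℝ) : Prop :=
  ∃ τ : ℕ → Ω → ℝ,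
    (∀ n, IsStoppingTime F (fun ω => ((τ n ω : ℝ) : WithTop ℝ))) ∧
    (∀ ω, Tendsto (fun n => τ n ω) atTop atTop) ∧
    (∀ n, Martingale (fun t ω => M (min t (τ n ω)) ω) F P)

/-- Generators of the predictable σ-field: `{0} × A₀` and `(s,t] × A_s`. -/
def predictableRectangles {m : MeasurableSpace Ω} (F : Filtration ℝ m) : Set (Set (ℝ × Ω)) :=
  {S | ∃ s t : ℝ, ∃ A : Set Ω, MeasurableSet[F s] A ∧ S = Ioc s t ×ˢ A} ∪
  {S | ∃ A : Set Ω, MeasurableSet[F 0] A ∧ S = {(0:ℝ)} ×ˢ A}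

/-- The predictable σ-field on `ℝ × Ω`. -/
def predictableSigma {m : MeasurableSpace Ω} (F : Filtration ℝ m) : MeasurableSpace (ℝ × Ω) :=
  MeasurableSpace.generateFrom (predictableRectangles F)

/-- A predictable process. -/
def PredictableProcess {m : MeasurableSpace Ω} (F : Filtration ℝ m) (M : ℝ → Ω → ℝ) : Prop :=
  @Measurable (ℝ × Ω) ℝ (predictableSigma F) _ (fun p => M p.1 p.2)

/-- A predictable random set. -/
def PredictableSet {m : MeasurableSpace Ω} (F : Filtration ℝ m) (S : Set (ℝ × Ω)) : Prop :=
  MeasurableSet[predictableSigma F] S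

/-- A predictable random field `W_s(e)(ω)`, measurable for the σ-field `𝒫 ⊗ B(ℝ)`. -/
def PredictableField {m : MeasurableSpace Ω} (F : Filtration ℝ m)
    (W : ℝ → ℝ → Ω → ℝ) : Prop :=
  @Measurable ((ℝ × Ω) × ℝ) ℝ ((predictableSigma F).prod (inferInstance : MeasurableSpace ℝ)) _
    (fun p => W p.1.1 p.2 p.1.2)

/-- A predictable time: a stopping time admitting an announcing sequence. -/
def IsPredictableTime {m : MeasurableSpace Ω} (F : Filtration ℝ m) (S : Ω → ℝ) : Prop :=
  IsStoppingTime F (fun ω => ((S ω : ℝ) : WithTop ℝ)) ∧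
  ∃ τ : ℕ → Ω → ℝ,
    (∀ n, IsStoppingTime F (fun ω => ((τ n ω : ℝ) : WithTop ℝ))) ∧
    (∀ n ω, τ n ω ≤ τ (n + 1) ω) ∧
    (∀ ω, Tendsto (fun n => τ n ω) atTop (nhds (S ω))) ∧
    (∀ n ω, 0 < S ω → τ n ω < S ω)

/-- Graph `[[T]]` of a random time (active when `0 < t`). -/
def graphOf (T : Ω → ℝ) : Set (ℝ × Ω) := {p | 0 < p.1 ∧ T p.2 = p.1}

/-- Totally inaccessible time: its graph meets the graph of no predictable time,
up to a null set. -/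
def TotallyInaccessible {m : MeasurableSpace Ω} (F : Filtration ℝ m) (P : Measure Ω)
    (T : Ω → ℝ) : Prop :=
  ∀ S : Ω → ℝ, IsPredictableTime F S → ∀ᵐ ω ∂P, ¬(0 < T ω ∧ T ω = S ω)

/-- An evanescent random set. -/
def Evanescent {m : MeasurableSpace Ω} (P : Measure Ω) (A : Set (ℝ × Ω)) : Prop :=
  ∀ᵐ ω ∂P, ∀ t : ℝ, (t, ω) ∉ A

/-- The class `𝒜⁺_loc` of increasing processes of locally integrable variation. -/
def InAplusLoc {m : MeasurableSpace Ω} (F : Filtration ℝ m) (P : Measure Ω)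
    (A : ℝ → Ω → ℝ≥0∞) : Prop :=
  ∃ τ : ℕ → Ω → ℝ,
    (∀ n, IsStoppingTime F (fun ω => ((τ n ω : ℝ) : WithTop ℝ))) ∧
    (∀ ω, Tendsto (fun n => τ n ω) atTop atTop) ∧
    (∀ n, ∫⁻ ω, A (τ n ω) ω ∂P ≠ ⊤)

/-- Purely discontinuous local martingale / orthogonal process: `[M,N] = 0` for every
continuous local martingale `N`, equivalently `M·N` is a local martingale for every
continuous local martingale `N`. -/
def PurelyDiscontinuous {m : MeasurableSpace Ω} (F : Filtration ℝ m) (P : Measure Ω)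
    (M : ℝ → Ω → ℝ) : Prop :=
  ∀ N : ℝ → Ω → ℝ, IsLocalMartingale F P N → (∀ ω, Continuous fun t => N t ω) →
    IsLocalMartingale F P (fun t ω => M t ω * N t ω)

/-- `v` is of class `C^{0,1}` with spatial derivative `vx`. -/
def IsC01 (v vx : ℝ → ℝ → ℝ) : Prop :=
  Continuous (Function.uncurry v) ∧ Continuous (Function.uncurry vx) ∧
  ∀ s x : ℝ, HasDerivAt (fun y => v s y) (vx s x) x

/-- Total mass of the atom of the random measure `ν` at time `t`: `ν̂_t(ℝ)`. -/
def hatNu (ν : Ω → Measure (ℝ × ℝ)) (t : ℝ) (ω : Ω) : ℝ≥0∞ :=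
  ν ω ({t} ×ˢ (univ : Set ℝ))

/-- The atom measure `ν̂_t(de) = ν({t}, de)`. -/
def hatNuMeasure (ν : Ω → Measure (ℝ × ℝ)) (t : ℝ) (ω : Ω) : Measure ℝ :=
  Measure.map Prod.snd ((ν ω).restrict ({t} ×ˢ (univ : Set ℝ)))

/-- `Ŵ_t = ∫ W_t(e) ν̂_t(de)`. -/
def hatW (ν : Ω → Measure (ℝ × ℝ)) (W : ℝ → ℝ → Ω → ℝ) (t : ℝ) (ω : Ω) : ℝ :=
  ∫ e, W t e ω ∂(hatNuMeasure ν t ω)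

/-- The predictable bracket process
`C(W)_{T'} = |W - Ŵ 1_J|² ⋆ ν_{T'} + ∑_{s ≤ T'} (1 - ν̂_s(ℝ)) |Ŵ_s|² 1_{J \ K}(s)`,
where `J = {ν̂ > 0}` and `K = {ν̂ = 1}`. -/
def CW (ν : Ω → Measure (ℝ × ℝ)) (W : ℝ → ℝ → Ω → ℝ) (T' : ℝ) (ω : Ω) : ℝ≥0∞ :=
  (∫⁻ p in Ioc (0:ℝ) T' ×ˢ (univ : Set ℝ),
      ENNReal.ofReal ((W p.1 p.2 ω -
        (if 0 < hatNu ν p.1 ω then hatW ν W p.1 ω else 0)) ^ 2) ∂(ν ω)) +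
  ∑' s : {s : ℝ // s ∈ Ioc (0:ℝ) T' ∧ 0 < hatNu ν s ω ∧ hatNu ν s ω ≠ 1},
    (1 - hatNu ν (s : ℝ) ω) * ENNReal.ofReal ((hatW ν W (s : ℝ) ω) ^ 2)

/-- `‖W‖²_{L²(μ)} = E ∫_{(0,T']×ℝ} |W_s(e)|² ν(ds de)`. -/
def L2normSq {m : MeasurableSpace Ω} (ν : Ω → Measure (ℝ × ℝ)) (W : ℝ → ℝ → Ω → ℝ)
    (T' : ℝ) (P : Measure Ω) : ℝ≥0∞ :=
  ∫⁻ ω, (∫⁻ p in Ioc (0:ℝ) T' ×ˢ (univ : Set ℝ),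
    ENNReal.ofReal ((W p.1 p.2 ω) ^ 2) ∂(ν ω)) ∂P


section Aux

/-- A real function with countable support is Borel measurable. -/
private lemma measurable_of_countable_support {g : ℝ → ℝ}
    (h : (Function.support g).Countable) : Measurable g := by
  intro B hB
  by_cases h0 : (0:ℝ) ∈ B
  · have hEq : g ⁻¹' B = (g ⁻¹' B ∩ Function.support g) ∪ (Function.support g)ᶜ := by
      ext x
      by_cases hx : g x = 0 <;>
        simp [Set.mem_preimage, Function.mem_support, hx, h0]
    rw [hEq]
    exact ((h.mono inter_subset_right).measurableSet).union h.measurableSet.compl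
  · have hsub : g ⁻¹' B ⊆ Function.support g := fun x hx hx0 => h0 (hx0 ▸ hx)
    exact (h.mono hsub).measurableSet

/-- Sections of a predictable random field are jointly Borel measurable in `(t, e)`. -/
private lemma predField_section_measurable {m : MeasurableSpace Ω} {F : Filtration ℝ m}
    {W : ℝ → ℝ → Ω → ℝ} (hW : PredictableField F W) (ω : Ω) :
    Measurable fun p : ℝ × ℝ => W p.1 p.2 ω := by
  have h1 : @Measurable ℝ (ℝ × Ω) _ (predictableSigma F) (fun t => (t, ω)) := by
    refine measurable_generateFrom ?_
    rintro S (⟨s, t, A, hA, rfl⟩ | ⟨A, hA, rfl⟩)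
    · by_cases hω : ω ∈ A
      · have hpre : (fun u : ℝ => (u, ω)) ⁻¹' (Ioc s t ×ˢ A) = Ioc s t := by
          ext u; simp [hω]
        rw [hpre]; exact measurableSet_Ioc
      · have hpre : (fun u : ℝ => (u, ω)) ⁻¹' (Ioc s t ×ˢ A) = ∅ := by
          ext u; simp [hω]
        rw [hpre]; exact MeasurableSet.empty
    · by_cases hω : ω ∈ A
      · have hpre : (fun u : ℝ => (u, ω)) ⁻¹' ({(0:ℝ)} ×ˢ A) = {0} := by
          ext u; simp [hω, eq_comm]
        rw [hpre]; exact measurableSet_singleton 0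
      · have hpre : (fun u : ℝ => (u, ω)) ⁻¹' ({(0:ℝ)} ×ˢ A) = ∅ := by
          ext u; simp [hω]
        rw [hpre]; exact MeasurableSet.empty
  have h2 : @Measurable (ℝ × ℝ) ((ℝ × Ω) × ℝ) _
      ((predictableSigma F).prod (inferInstance : MeasurableSpace ℝ))
      (fun p => ((p.1, ω), p.2)) := by
    letI : MeasurableSpace (ℝ × Ω) := predictableSigma F
    exact (h1.comp measurable_fst).prodMk measurable_snd
  exact hW.comp h2

/-- Integration over the vertical slice `{t} × ℝ` equals integration against the
projected measure. -/
private lemma slice_lintegral (μ : Measure (ℝ × ℝ)) {g : ℝ × ℝ → ℝ≥0∞}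
    (hg : Measurable g) (t : ℝ) :
    ∫⁻ p in {t} ×ˢ (univ : Set ℝ), g p ∂μ
      = ∫⁻ e, g (t, e) ∂(Measure.map Prod.snd (μ.restrict ({t} ×ˢ (univ : Set ℝ)))) := by
  have hf : Measurable fun e : ℝ => g (t, e) := hg.comp measurable_prodMk_left
  rw [lintegral_map hf measurable_snd]
  refine lintegral_congr_ae ?_
  filter_upwards [ae_restrict_mem ((measurableSet_singleton t).prod MeasurableSet.univ)] with p hp
  have hp1 : p.1 = t := hp.1
  rw [show ((t : ℝ), p.2) = p from Prod.ext hp1.symm rfl]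

/-- The key per-slice quadratic inequality:
`∫ (w - ∫w)² dρ + (1 - ρ(ℝ)) (∫w)² ≤ ∫ w² dρ` when `ρ(ℝ) ≤ 1`. -/
private lemma slice_quadratic_ineq {ρ : Measure ℝ} [IsFiniteMeasure ρ]
    (hρ1 : ρ univ ≤ 1) {w : ℝ → ℝ} (hw : Measurable w)
    (h2 : ∫⁻ e, ENNReal.ofReal (w e ^ 2) ∂ρ ≠ ⊤) :
    (∫⁻ e, ENNReal.ofReal ((w e - ∫ x, w x ∂ρ) ^ 2) ∂ρ)
      + (1 - ρ univ) * ENNReal.ofReal ((∫ x, w x ∂ρ) ^ 2)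
      ≤ ∫⁻ e, ENNReal.ofReal (w e ^ 2) ∂ρ := by
  set a := ∫ x, w x ∂ρ with ha
  set m' := (ρ univ).toReal with hm'
  have hmne : ρ univ ≠ ⊤ := measure_ne_top ρ univ
  have hm0 : (0:ℝ) ≤ m' := ENNReal.toReal_nonneg
  have hm1 : m' ≤ 1 := by
    have := ENNReal.toReal_mono (b := 1) (by simp) hρ1
    simpa using this
  have hw2 : Integrable (fun e => w e ^ 2) ρ := by
    refine ⟨(hw.pow_const 2).aestronglyMeasurable, ?_⟩
    rw [hasFiniteIntegral_iff_ofReal (ae_of_all _ fun e => sq_nonneg _)]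
    exact h2.lt_top
  have hw1 : Integrable w ρ := by
    refine Integrable.mono' (hw2.add (integrable_const 1)) hw.aestronglyMeasurable
      (ae_of_all _ fun e => ?_)
    have habs : |w e| ≤ w e ^ 2 + 1 := by
      nlinarith [sq_nonneg (|w e| - 1), sq_abs (w e), abs_nonneg (w e)]
    simpa using habs
  have hexp : (fun e => (w e - a) ^ 2) = fun e => w e ^ 2 - (2 * a) * w e + a ^ 2 := by
    ext e; ring
  have hsub : Integrable (fun e => w e ^ 2 - 2 * a * w e) ρ := hw2.sub (hw1.const_mul _)
  have hwa2 : Integrable (fun e => (w e - a) ^ 2) ρ := by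
    rw [hexp]
    exact hsub.add (integrable_const _)
  have hint : ∫ e, (w e - a) ^ 2 ∂ρ = (∫ e, w e ^ 2 ∂ρ) - 2 * a ^ 2 + m' * a ^ 2 := by
    rw [hexp, integral_add hsub (integrable_const _),
      integral_sub hw2 (hw1.const_mul _), integral_const_mul, integral_const]
    simp only [smul_eq_mul, measureReal_def, ← ha, ← hm']
    ring
  rw [← ofReal_integral_eq_lintegral_ofReal hw2 (ae_of_all _ fun e => sq_nonneg _),
      ← ofReal_integral_eq_lintegral_ofReal hwa2 (ae_of_all _ fun e => sq_nonneg _)]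
  have hmρ : ρ univ = ENNReal.ofReal m' := (ENNReal.ofReal_toReal hmne).symm
  rw [hmρ, show (1:ℝ≥0∞) - ENNReal.ofReal m' = ENNReal.ofReal (1 - m') by
        rw [ENNReal.ofReal_sub _ hm0, ENNReal.ofReal_one],
      ← ENNReal.ofReal_mul (by linarith),
      ← ENNReal.ofReal_add (integral_nonneg fun e => sq_nonneg _) (by nlinarith [sq_nonneg a])]
  apply ENNReal.ofReal_le_ofReal
  rw [hint]
  nlinarith [sq_nonneg a]

end Aux

/-- `L²(μ) ⊆ G²(μ)` with `‖W‖²_{G²(μ)} = E[C(W)_{T'}] ≤ ‖W‖²_{L²(μ)}`. -/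
theorem L2_subset_G2_with_norm_inequality
    {m : MeasurableSpace Ω} (F : Filtration ℝ m) (P : Measure Ω) [IsProbabilityMeasure P]
    (ν : Ω → Measure (ℝ × ℝ)) (T' : ℝ) (hT' : 0 < T')
    (hν1 : ∀ ω t, hatNu ν t ω ≤ 1)
    (W : ℝ → ℝ → Ω → ℝ) (hWpred : PredictableField F W)
    (hL2 : L2normSq ν W T' P ≠ ⊤) :
    (∫⁻ ω, CW ν W T' ω ∂P) ≤ L2normSq ν W T' P ∧ (∫⁻ ω, CW ν W T' ω ∂P) ≠ ⊤ := by
  classical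
  have key : ∀ ω, CW ν W T' ω ≤ ∫⁻ p in Ioc (0:ℝ) T' ×ˢ (univ : Set ℝ),
      ENNReal.ofReal ((W p.1 p.2 ω) ^ 2) ∂(ν ω) := by
    intro ω
    set μ := ν ω with hμ
    set I := ∫⁻ p in Ioc (0:ℝ) T' ×ˢ (univ : Set ℝ),
      ENNReal.ofReal ((W p.1 p.2 ω) ^ 2) ∂μ with hIdef
    by_cases hI : I = ⊤
    · rw [hI]; exact le_top
    -- basic objects
    have hWm : Measurable fun p : ℝ × ℝ => W p.1 p.2 ω :=
      predField_section_measurable hWpred ω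
    set region : Set (ℝ × ℝ) := Ioc (0:ℝ) T' ×ˢ (univ : Set ℝ) with hregion
    have hregm : MeasurableSet region := measurableSet_Ioc.prod MeasurableSet.univ
    set F2 : ℝ × ℝ → ℝ≥0∞ := fun p => ENNReal.ofReal ((W p.1 p.2 ω) ^ 2) with hF2def
    have hF2m : Measurable F2 := ENNReal.measurable_ofReal.comp (hWm.pow_const 2)
    have hwte : ∀ t : ℝ, Measurable fun e => W t e ω := fun t =>
      hWm.comp (measurable_const.prodMk measurable_id)
    -- slice facts
    have hslicem : ∀ t : ℝ, MeasurableSet ({t} ×ˢ (univ : Set ℝ)) := fun t =>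
      (measurableSet_singleton t).prod MeasurableSet.univ
    have hslice_sub : ∀ t ∈ Ioc (0:ℝ) T', {t} ×ˢ (univ : Set ℝ) ⊆ region := by
      intro t ht
      exact Set.prod_mono (singleton_subset_iff.2 ht) Subset.rfl
    have hρuniv : ∀ t : ℝ, hatNuMeasure ν t ω univ = hatNu ν t ω := by
      intro t
      rw [hatNuMeasure, Measure.map_apply measurable_snd MeasurableSet.univ]
      simp [hatNu, Measure.restrict_apply, hμ]
    have hρfin : ∀ t : ℝ, IsFiniteMeasure (hatNuMeasure ν t ω) := by
      intro t
      refine ⟨?_⟩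
      rw [hρuniv t]
      exact lt_of_le_of_lt (hν1 ω t) ENNReal.one_lt_top
    have hsliceF2 : ∀ t : ℝ, ∫⁻ p in {t} ×ˢ (univ : Set ℝ), F2 p ∂μ
        = ∫⁻ e, ENNReal.ofReal ((W t e ω) ^ 2) ∂(hatNuMeasure ν t ω) := by
      intro t
      rw [slice_lintegral μ hF2m t]
      rfl
    have hsliceF2_le : ∀ t ∈ Ioc (0:ℝ) T',
        ∫⁻ p in {t} ×ˢ (univ : Set ℝ), F2 p ∂μ ≤ I := by
      intro t ht
      exact lintegral_mono_set (hslice_sub t ht)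
    -- the countable exceptional set
    set N₁ : Set ℝ := {t | t ∈ Ioc (0:ℝ) T' ∧ 0 < hatNu ν t ω ∧ hatW ν W t ω ≠ 0}
      with hN₁def
    have hN₁Ioc : N₁ ⊆ Ioc (0:ℝ) T' := fun t ht => ht.1
    have hhatW_zero : ∀ t ∈ Ioc (0:ℝ) T', t ∉ N₁ → 0 < hatNu ν t ω →
        hatW ν W t ω = 0 := by
      intro t ht htn hpos
      by_contra hne
      exact htn ⟨ht, hpos, hne⟩
    have hcount : N₁.Countable := by
      set μ' : Measure (ℝ × ℝ) := (μ.withDensity F2).restrict region with hμ'def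
      have htsum : (∑' t : ℝ, μ' ({t} ×ˢ (univ : Set ℝ))) ≠ ⊤ := by
        refine ne_top_of_le_ne_top ?_ (tsum_meas_le_meas_iUnion_of_disjoint μ'
          (fun t => hslicem t) ?_)
        · refine ne_top_of_le_ne_top hI ?_
          have : μ' (⋃ t : ℝ, {t} ×ˢ (univ : Set ℝ)) ≤ μ' Set.univ := measure_mono
            (subset_univ _)
          refine le_trans this ?_
          rw [hμ'def, Measure.restrict_apply_univ, withDensity_apply _ hregm]
        · intro s t hst
          refine Set.disjoint_left.2 ?_
          rintro ⟨x, y⟩ hx hy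
          exact hst (hx.1.symm.trans hy.1)
      have hsupp := Summable.countable_support_ennreal htsum
      refine Set.Countable.mono ?_ hsupp
      intro t ht
      have htIoc : t ∈ Ioc (0:ℝ) T' := ht.1
      have hμ't : μ' ({t} ×ˢ (univ : Set ℝ)) = ∫⁻ p in {t} ×ˢ (univ : Set ℝ), F2 p ∂μ := by
        rw [hμ'def, Measure.restrict_apply (hslicem t),
          inter_eq_self_of_subset_left (hslice_sub t htIoc), withDensity_apply _ (hslicem t)]
      simp only [Function.mem_support, hμ't]
      intro hzero
      rw [hsliceF2 t] at hzero
      have hm2 : Measurable fun e => ENNReal.ofReal ((W t e ω) ^ 2) :=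
        ENNReal.measurable_ofReal.comp ((hwte t).pow_const 2)
      have hae : (fun e => ENNReal.ofReal ((W t e ω) ^ 2))
          =ᵐ[hatNuMeasure ν t ω] 0 := by
        rw [← lintegral_eq_zero_iff hm2]
        exact hzero
      have hwae : (fun e => W t e ω) =ᵐ[hatNuMeasure ν t ω] 0 := by
        filter_upwards [hae] with e he
        simp only [Pi.zero_apply, ENNReal.ofReal_eq_zero] at he
        have h0 : W t e ω ^ 2 = 0 := le_antisymm he (sq_nonneg _)
        simpa using (pow_eq_zero_iff (two_ne_zero)).mp h0
      have : hatW ν W t ω = 0 := by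
        rw [hatW, integral_eq_zero_of_ae hwae]
      exact ht.2.2 this
    haveI : Countable ↥N₁ := hcount.to_subtype
    have hN₁m : MeasurableSet N₁ := hcount.measurableSet
    -- the modified (measurable) compensating function
    set c' : ℝ → ℝ := N₁.indicator (fun t => hatW ν W t ω) with hc'def
    have hc'm : Measurable c' := by
      apply measurable_of_countable_support
      exact hcount.mono Set.support_indicator_subset
    set f' : ℝ × ℝ → ℝ≥0∞ := fun p => ENNReal.ofReal ((W p.1 p.2 ω - c' p.1) ^ 2)
      with hf'def
    have hf'm : Measurable f' :=
      ENNReal.measurable_ofReal.comp ((hWm.sub (hc'm.comp measurable_fst)).pow_const 2)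
    -- rewrite the first term of CW using f'
    have hA : (∫⁻ p in region, ENNReal.ofReal ((W p.1 p.2 ω -
          (if 0 < hatNu ν p.1 ω then hatW ν W p.1 ω else 0)) ^ 2) ∂μ)
        = ∫⁻ p in region, f' p ∂μ := by
      refine setLIntegral_congr_fun hregm ?_
      intro p hp
      beta_reduce
      have hp1 : p.1 ∈ Ioc (0:ℝ) T' := hp.1
      congr 2
      by_cases hmem : p.1 ∈ N₁
      · rw [hc'def, Set.indicator_of_mem hmem, if_pos hmem.2.1]
      · rw [hc'def, Set.indicator_of_notMem hmem]
        by_cases hpos : 0 < hatNu ν p.1 ω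
        · rw [if_pos hpos, hhatW_zero p.1 hp1 hmem hpos]
        · rw [if_neg hpos]
    -- splitting the region
    have hsplit : region = (N₁ ×ˢ (univ : Set ℝ)) ∪ ((Ioc (0:ℝ) T' \ N₁) ×ˢ (univ : Set ℝ)) := by
      rw [← Set.union_prod, Set.union_diff_cancel' Subset.rfl hN₁Ioc]
    have hdisj : Disjoint (N₁ ×ˢ (univ : Set ℝ)) ((Ioc (0:ℝ) T' \ N₁) ×ˢ (univ : Set ℝ)) := by
      refine Set.disjoint_left.2 ?_
      rintro ⟨x, y⟩ hx hy
      exact hy.1.2 hx.1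
    have hN₁union : N₁ ×ˢ (univ : Set ℝ) = ⋃ t : N₁, {(t : ℝ)} ×ˢ (univ : Set ℝ) := by
      ext p
      constructor
      · intro hp
        exact Set.mem_iUnion.2 ⟨⟨p.1, hp.1⟩, ⟨rfl, trivial⟩⟩
      · intro hp
        obtain ⟨t, ht⟩ := Set.mem_iUnion.1 hp
        refine ⟨?_, trivial⟩
        rw [show p.1 = (t : ℝ) from ht.1]
        exact t.2
    have hslice_disj : Pairwise (Disjoint on fun t : N₁ => {(t : ℝ)} ×ˢ (univ : Set ℝ)) := by
      intro s t hst
      refine Set.disjoint_left.2 ?_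
      rintro ⟨x, y⟩ hx hy
      exact hst (Subtype.ext (hx.1.symm.trans hy.1))
    have hsplitL : ∀ g : ℝ × ℝ → ℝ≥0∞, Measurable g →
        ∫⁻ p in region, g p ∂μ
          = (∑' t : N₁, ∫⁻ p in {(t : ℝ)} ×ˢ (univ : Set ℝ), g p ∂μ)
            + ∫⁻ p in (Ioc (0:ℝ) T' \ N₁) ×ˢ (univ : Set ℝ), g p ∂μ := by
      intro g hg
      rw [hsplit, lintegral_union ((measurableSet_Ioc.diff hN₁m).prod MeasurableSet.univ) hdisj,
        hN₁union, lintegral_iUnion (fun t => hslicem _) hslice_disj]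
    -- on the complement the integrands agree
    have hrest : ∫⁻ p in (Ioc (0:ℝ) T' \ N₁) ×ˢ (univ : Set ℝ), f' p ∂μ
        = ∫⁻ p in (Ioc (0:ℝ) T' \ N₁) ×ˢ (univ : Set ℝ), F2 p ∂μ := by
      refine setLIntegral_congr_fun ((measurableSet_Ioc.diff hN₁m).prod MeasurableSet.univ)
        ?_
      intro p hp
      have : c' p.1 = 0 := Set.indicator_of_notMem hp.1.2 _
      rw [hf'def]
      simp only [this, sub_zero]
      rfl
    -- per-slice inequality
    have hperslice : ∀ t : N₁,
        (∫⁻ p in {(t : ℝ)} ×ˢ (univ : Set ℝ), f' p ∂μ)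
          + (1 - hatNu ν (t : ℝ) ω) * ENNReal.ofReal ((hatW ν W (t : ℝ) ω) ^ 2)
        ≤ ∫⁻ p in {(t : ℝ)} ×ˢ (univ : Set ℝ), F2 p ∂μ := by
      rintro ⟨t, ht⟩
      haveI := hρfin t
      have hfin : (∫⁻ e, ENNReal.ofReal ((W t e ω) ^ 2) ∂(hatNuMeasure ν t ω)) ≠ ⊤ := by
        rw [← hsliceF2 t]
        exact ne_top_of_le_ne_top hI (hsliceF2_le t ht.1)
      have hkey := slice_quadratic_ineq (ρ := hatNuMeasure ν t ω)
        (by rw [hρuniv t]; exact hν1 ω t) (hwte t) hfin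
      have hc't : c' t = hatW ν W t ω := Set.indicator_of_mem ht _
      have hslicef' : ∫⁻ p in {t} ×ˢ (univ : Set ℝ), f' p ∂μ
          = ∫⁻ e, ENNReal.ofReal ((W t e ω - hatW ν W t ω) ^ 2) ∂(hatNuMeasure ν t ω) := by
        rw [slice_lintegral μ hf'm t]
        simp only [hf'def, hc't]
        rfl
      have hWeq : hatW ν W t ω = ∫ x, W t x ω ∂(hatNuMeasure ν t ω) := rfl
      rw [hslicef', hsliceF2 t, ← hρuniv t, hWeq]
      simpa using hkey
    -- bound the jump-sum term of CW
    set g : ℝ → ℝ≥0∞ := fun t =>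
      (1 - hatNu ν t ω) * ENNReal.ofReal ((hatW ν W t ω) ^ 2) with hgdef
    have hB : (∑' s : {s : ℝ // s ∈ Ioc (0:ℝ) T' ∧ 0 < hatNu ν s ω ∧ hatNu ν s ω ≠ 1},
          (1 - hatNu ν (s : ℝ) ω) * ENNReal.ofReal ((hatW ν W (s : ℝ) ω) ^ 2))
        ≤ ∑' t : N₁, g (t : ℝ) := by
      have h1 : ∀ s : {s : ℝ // s ∈ Ioc (0:ℝ) T' ∧ 0 < hatNu ν s ω ∧ hatNu ν s ω ≠ 1},
          (1 - hatNu ν (s : ℝ) ω) * ENNReal.ofReal ((hatW ν W (s : ℝ) ω) ^ 2)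
            ≤ N₁.indicator g (s : ℝ) := by
        rintro ⟨s, hs1, hs2, hs3⟩
        by_cases hmem : s ∈ N₁
        · rw [Set.indicator_of_mem hmem]
        · rw [hhatW_zero s hs1 hmem hs2]
          simp
      calc (∑' s : {s : ℝ // s ∈ Ioc (0:ℝ) T' ∧ 0 < hatNu ν s ω ∧ hatNu ν s ω ≠ 1},
          (1 - hatNu ν (s : ℝ) ω) * ENNReal.ofReal ((hatW ν W (s : ℝ) ω) ^ 2))
          ≤ ∑' s : {s : ℝ // s ∈ Ioc (0:ℝ) T' ∧ 0 < hatNu ν s ω ∧ hatNu ν s ω ≠ 1},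
            N₁.indicator g (s : ℝ) := ENNReal.tsum_le_tsum h1
        _ ≤ ∑' t : ℝ, N₁.indicator g t :=
            ENNReal.tsum_comp_le_tsum_of_injective Subtype.val_injective _
        _ = ∑' t : N₁, g (t : ℝ) := (tsum_subtype N₁ g).symm
    -- assemble
    have hCW : CW ν W T' ω
        = (∫⁻ p in region, ENNReal.ofReal ((W p.1 p.2 ω -
            (if 0 < hatNu ν p.1 ω then hatW ν W p.1 ω else 0)) ^ 2) ∂μ)
          + ∑' s : {s : ℝ // s ∈ Ioc (0:ℝ) T' ∧ 0 < hatNu ν s ω ∧ hatNu ν s ω ≠ 1},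
            (1 - hatNu ν (s : ℝ) ω) * ENNReal.ofReal ((hatW ν W (s : ℝ) ω) ^ 2) := rfl
    rw [hCW, hA, hsplitL f' hf'm, hrest]
    have hIeq : I = (∑' t : N₁, ∫⁻ p in {(t : ℝ)} ×ˢ (univ : Set ℝ), F2 p ∂μ)
        + ∫⁻ p in (Ioc (0:ℝ) T' \ N₁) ×ˢ (univ : Set ℝ), F2 p ∂μ := hsplitL F2 hF2m
    rw [hIdef] at hIeq
    rw [hIdef, hIeq]
    calc ((∑' t : N₁, ∫⁻ p in {(t : ℝ)} ×ˢ (univ : Set ℝ), f' p ∂μ)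
          + ∫⁻ p in (Ioc (0:ℝ) T' \ N₁) ×ˢ (univ : Set ℝ), F2 p ∂μ)
        + ∑' s : {s : ℝ // s ∈ Ioc (0:ℝ) T' ∧ 0 < hatNu ν s ω ∧ hatNu ν s ω ≠ 1},
            (1 - hatNu ν (s : ℝ) ω) * ENNReal.ofReal ((hatW ν W (s : ℝ) ω) ^ 2)
        ≤ ((∑' t : N₁, ∫⁻ p in {(t : ℝ)} ×ˢ (univ : Set ℝ), f' p ∂μ)
          + ∫⁻ p in (Ioc (0:ℝ) T' \ N₁) ×ˢ (univ : Set ℝ), F2 p ∂μ)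
          + ∑' t : N₁, g (t : ℝ) := by gcongr
      _ = ((∑' t : N₁, ∫⁻ p in {(t : ℝ)} ×ˢ (univ : Set ℝ), f' p ∂μ)
            + ∑' t : N₁, g (t : ℝ))
          + ∫⁻ p in (Ioc (0:ℝ) T' \ N₁) ×ˢ (univ : Set ℝ), F2 p ∂μ := by ring
      _ = (∑' t : N₁, ((∫⁻ p in {(t : ℝ)} ×ˢ (univ : Set ℝ), f' p ∂μ) + g (t : ℝ)))
          + ∫⁻ p in (Ioc (0:ℝ) T' \ N₁) ×ˢ (univ : Set ℝ), F2 p ∂μ := by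
            rw [ENNReal.tsum_add]
      _ ≤ (∑' t : N₁, ∫⁻ p in {(t : ℝ)} ×ˢ (univ : Set ℝ), F2 p ∂μ)
          + ∫⁻ p in (Ioc (0:ℝ) T' \ N₁) ×ˢ (univ : Set ℝ), F2 p ∂μ := by
            gcongr with t
            exact hperslice t
  constructor
  · exact lintegral_mono key
  · exact ne_top_of_le_ne_top hL2 (lintegral_mono key)
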